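/- Let (𝔡, ⟨·,·⟩) be a quadratic Lie algebra and 𝔤 ⊆ 𝔡 a Lagrangian Lie subalgebra (𝔤 = 𝔤^⊥) which is unimodular, i.e. Tr(ad_x: 𝔤 → 𝔤) = 0 for every x ∈ 𝔤. Let χ(x,y,z) = ⟨[x,y], z⟩ be the Cartan 3-form. Then for any basis (t_μ) of 𝔡 with ⟨·,·⟩-dual basis (t^μ) (determined by ⟨t^μ, t_ν⟩ = δ^μ_ν), the full contraction ∑_{λ,μ,ν} χ(t_λ, t_μ, t_ν) · χ(t^λ, t^μ, t^ν) equals 0. -/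

import Mathlib

open LinearMap (BilinForm)
open Module

section stmt9Aux

variable {D : Type*} [AddCommGroup D] [Module ℝ D]
variable {ι κ : Type*} [Fintype ι] [Fintype κ]

/-- Coordinates with respect to a basis can be computed by pairing with a
`B`-dual family. -/
private lemma stmt9_dual_coord [DecidableEq ι] (B : BilinForm ℝ D) (b : Basis ι ℝ D) (c : ι → D)
    (hdual : ∀ μ ν : ι, B (c μ) (b ν) = if μ = ν then 1 else 0) (x : D) (l : ι) :
    B (c l) x = b.repr x l := by
  conv_lhs => rw [← b.sum_repr x]
  rw [map_sum]
  simp only [map_smul, smul_eq_mul, hdual]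
  simp [Finset.sum_ite_eq', mul_comm]

/-- Resolution of the identity, version 1. -/
private lemma stmt9_res1 [DecidableEq ι] (B : BilinForm ℝ D) (hsymm : B.IsSymm)
    (b : Basis ι ℝ D) (c : ι → D)
    (hdual : ∀ μ ν : ι, B (c μ) (b ν) = if μ = ν then 1 else 0) (x : D) :
    ∑ l, B x (c l) • b l = x := by
  conv_rhs => rw [← b.sum_repr x]
  refine Finset.sum_congr rfl fun l _ => ?_
  rw [show B x (c l) = B (c l) x from hsymm.eq x (c l), stmt9_dual_coord B b c hdual x l]

/-- Resolution of the identity, version 2 (uses nondegeneracy). -/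
private lemma stmt9_res2 [DecidableEq ι] (B : BilinForm ℝ D) (hnd : B.Nondegenerate)
    (b : Basis ι ℝ D) (c : ι → D)
    (hdual : ∀ μ ν : ι, B (c μ) (b ν) = if μ = ν then 1 else 0) (x : D) :
    ∑ l, B x (b l) • c l = x := by
  have key : ∀ y, B (x - ∑ l, B x (b l) • c l) y = 0 := by
    intro y
    have hb : ∀ m, B (x - ∑ l, B x (b l) • c l) (b m) = 0 := by
      intro m
      rw [map_sub, LinearMap.sub_apply, map_sum, LinearMap.sum_apply]
      have : ∀ l, B (B x (b l) • c l) (b m) = B x (b l) * B (c l) (b m) := by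
        intro l; rw [map_smul]; simp
      simp only [this, hdual]
      simp [Finset.sum_ite_eq']
    conv_lhs => rw [← b.sum_repr y]
    rw [map_sum]
    simp only [map_smul, smul_eq_mul, hb, mul_zero]
    simp
  have h0 := hnd.1 _ (fun y => key y)
  exact (sub_eq_zero.mp h0).symm

/-- Basis-independence of the full contraction of a bilinear expression
against a `B`-dual pair. -/
private lemma stmt9_swapPair (B : BilinForm ℝ D) (hsymm : B.IsSymm)
    (b c : ι → D) (t s : κ → D)
    (hbc : ∀ x, ∑ l, B x (c l) • b l = x)
    (hts : ∀ x, ∑ m, B x (s m) • t m = x)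
    (hst : ∀ x, ∑ m, B x (t m) • s m = x)
    (F : D →ₗ[ℝ] D →ₗ[ℝ] ℝ) :
    ∑ l, F (b l) (c l) = ∑ m, F (t m) (s m) := by
  have step1 : ∀ l : ι, F (b l) (c l)
      = ∑ m, ∑ n, B (b l) (s m) * (B (c l) (t n) * F (t m) (s n)) := by
    intro l
    conv_lhs => rw [← hts (b l), ← hst (c l)]
    simp only [map_sum, map_smul, LinearMap.sum_apply, LinearMap.smul_apply, smul_eq_mul]
    simp only [Finset.mul_sum]
    rw [Finset.sum_comm]
    exact Finset.sum_congr rfl fun m _ => Finset.sum_congr rfl fun n _ => by ring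
  calc ∑ l, F (b l) (c l)
      = ∑ l, ∑ m, ∑ n, B (b l) (s m) * (B (c l) (t n) * F (t m) (s n)) :=
        Finset.sum_congr rfl fun l _ => step1 l
    _ = ∑ m, ∑ n, (∑ l, B (b l) (s m) * B (c l) (t n)) * F (t m) (s n) := by
        rw [Finset.sum_comm]
        refine Finset.sum_congr rfl fun m _ => ?_
        rw [Finset.sum_comm]
        refine Finset.sum_congr rfl fun n _ => ?_
        rw [Finset.sum_mul]
        exact Finset.sum_congr rfl fun l _ => by ring
    _ = ∑ m, ∑ n, B (s m) (t n) * F (t m) (s n) := by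
        refine Finset.sum_congr rfl fun m _ => Finset.sum_congr rfl fun n _ => ?_
        congr 1
        have : ∀ l, B (b l) (s m) * B (c l) (t n) = B (s m) (B (t n) (c l) • b l) := by
          intro l
          rw [map_smul, smul_eq_mul, show B (b l) (s m) = B (s m) (b l) from hsymm.eq _ _,
            show B (c l) (t n) = B (t n) (c l) from hsymm.eq _ _]
          ring
        simp only [this]
        rw [← map_sum, hbc (t n)]
    _ = ∑ m, F (t m) (s m) := by
        refine Finset.sum_congr rfl fun m _ => ?_
        have : ∀ n, B (s m) (t n) * F (t m) (s n) = F (t m) (B (s m) (t n) • s n) := by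
          intro n; rw [map_smul]; simp
        simp only [this]
        rw [← map_sum, hst (s m)]

end stmt9Aux

section stmt9Lie

variable {D : Type*} [LieRing D] [LieAlgebra ℝ D]

private lemma stmt9_lie_sum {κ : Type*} [Fintype κ] (a : D) (f : κ → D) :
    ⁅a, ∑ i, f i⁆ = ∑ i, ⁅a, f i⁆ :=
  map_sum (LieAlgebra.ad ℝ D a) f Finset.univ

private lemma stmt9_sum_lie {κ : Type*} [Fintype κ] (f : κ → D) (a : D) :
    ⁅∑ i, f i, a⁆ = ∑ i, ⁅f i, a⁆ := by
  rw [← lie_skew, stmt9_lie_sum]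
  rw [← Finset.sum_neg_distrib]
  exact Finset.sum_congr rfl fun i _ => lie_skew _ _

end stmt9Lie

set_option maxHeartbeats 1000000 in
/-- For a quadratic Lie algebra `(𝔡, B)` with a Lagrangian, unimodular Lie
subalgebra `𝔤`, the full contraction `⟨χ,χ⟩` of the Cartan 3-form
`χ(x,y,z) = ⟨[x,y],z⟩` with itself (via any `B`-dual pair of bases) vanishes. -/
theorem stmt9 (D : Type*) [LieRing D] [LieAlgebra ℝ D] [FiniteDimensional ℝ D]
    (B : LinearMap.BilinForm ℝ D) (hnd : B.Nondegenerate) (hsymm : B.IsSymm)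
    (hinv : ∀ x y z : D, B ⁅x, y⁆ z = B x ⁅y, z⁆)
    (g : LieSubalgebra ℝ D) (hlag : (g : Submodule ℝ D) = B.orthogonal ↑g)
    (huni : ∀ x : g, LinearMap.trace ℝ g (LieAlgebra.ad ℝ g x) = 0)
    (ι : Type*) [Fintype ι] [DecidableEq ι] (b : Basis ι ℝ D) (c : ι → D)
    (hdual : ∀ μ ν : ι, B (c μ) (b ν) = if μ = ν then 1 else 0) :
    ∑ l : ι, ∑ m : ι, ∑ n : ι,
      B ⁅b l, b m⁆ (b n) * B ⁅c l, c m⁆ (c n) = 0 := by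
  classical
  rcases isEmpty_or_nonempty ι with hι | hι
  · simp
  -- basic facts about `g`
  have hrefl : B.IsRefl := hsymm.isRefl
  have horthg : ∀ x y : D, x ∈ g → y ∈ g → B x y = 0 := by
    intro x y hx hy
    have : y ∈ B.orthogonal (g : Submodule ℝ D) := hlag ▸ hy
    exact this x hx
  have hmemg : ∀ v : D, (∀ y ∈ g, B y v = 0) → v ∈ g := by
    intro v hv
    have : v ∈ B.orthogonal (g : Submodule ℝ D) := fun y hy => hv y hy
    rw [← hlag] at this
    exact this
  -- dimensions
  set n := finrank ℝ g with hn
  have hdim : n + n = finrank ℝ D := by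
    have h := LinearMap.BilinForm.finrank_add_finrank_orthogonal hrefl (W := (g : Submodule ℝ D))
    rw [← hlag, LinearMap.BilinForm.orthogonal_top_eq_bot hnd, inf_bot_eq, finrank_bot, add_zero] at h
    have hfg : finrank ℝ (g : Submodule ℝ D) = n := rfl
    rw [hfg] at h
    exact h
  have hDpos : 0 < finrank ℝ D := by
    rw [finrank_eq_card_basis b]
    exact Fintype.card_pos
  have hnpos : 0 < n := by omega
  have : Nonempty (Fin n) := ⟨⟨0, hnpos⟩⟩
  -- the adapted basis of `g`
  let bg : Basis (Fin n) ℝ g := Module.finBasis ℝ g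
  let e : Fin n → D := fun k => ((bg k : g) : D)
  have he : ∀ k, e k ∈ g := fun k => (bg k).2
  have hee : ∀ i j, B (e i) (e j) = 0 := fun i j => horthg _ _ (he i) (he j)
  -- a dual family via a complement
  obtain ⟨W, hW⟩ := Submodule.exists_isCompl (g : Submodule ℝ D)
  let π : D →ₗ[ℝ] (g : Submodule ℝ D) := (g : Submodule ℝ D).linearProjOfIsCompl W hW
  let u : Fin n → D := fun j => (B.toDual hnd).symm ((bg.coord j) ∘ₗ π)
  have hBu : ∀ j y, B (u j) y = bg.coord j (π y) := by
    intro j y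
    exact LinearMap.BilinForm.apply_toDual_symm_apply (hB := hnd) _ y
  have hue : ∀ j i, B (u j) (e i) = if j = i then 1 else 0 := by
    intro j i
    rw [hBu]
    have : π (e i) = bg i := Submodule.linearProjOfIsCompl_apply_left hW (bg i)
    rw [this]
    simp [Basis.coord_apply, Finsupp.single_apply, eq_comm]
  -- isotropic correction of the dual family
  let f : Fin n → D := fun j => u j - (2⁻¹ : ℝ) • ∑ k, B (u j) (u k) • e k
  have heu : ∀ i j, B (e i) (u j) = if i = j then 1 else 0 := by
    intro i j
    rw [show B (e i) (u j) = B (u j) (e i) from hsymm.eq _ _, hue]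
    simp [eq_comm]
  have hef : ∀ i j, B (e i) (f j) = if i = j then 1 else 0 := by
    intro i j
    show B (e i) (u j - (2⁻¹ : ℝ) • ∑ k, B (u j) (u k) • e k) = _
    rw [map_sub, map_smul, map_sum]
    simp only [map_smul, smul_eq_mul, hee, mul_zero, Finset.sum_const_zero, smul_zero, sub_zero]
    exact heu i j
  have huf : ∀ i j, B (u i) (f j) = 2⁻¹ * B (u i) (u j) := by
    intro i j
    show B (u i) (u j - (2⁻¹ : ℝ) • ∑ k, B (u j) (u k) • e k) = _
    simp only [map_sub, map_smul, map_sum, smul_eq_mul, hue, mul_ite, mul_one, mul_zero,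
      Finset.sum_ite_eq, Finset.mem_univ, if_true]
    rw [show B (u j) (u i) = B (u i) (u j) from hsymm.eq _ _]
    ring
  have hff : ∀ i j, B (f i) (f j) = 0 := by
    intro i j
    show B (u i - (2⁻¹ : ℝ) • ∑ k, B (u i) (u k) • e k) (f j) = 0
    simp only [map_sub, map_smul, map_sum, LinearMap.sub_apply, LinearMap.smul_apply,
      LinearMap.sum_apply, smul_eq_mul, huf]
    have h1 : ∀ k, B (B (u i) (u k) • e k) (f j) = B (u i) (u k) * B (e k) (f j) := by
      intro k; rw [map_smul]; simp
    simp only [h1, hef, mul_ite, mul_one, mul_zero, Finset.sum_ite_eq',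
      Finset.mem_univ, if_true]
    ring
  have hfe : ∀ i j, B (f i) (e j) = if i = j then 1 else 0 := by
    intro i j
    rw [show B (f i) (e j) = B (e j) (f i) from hsymm.eq _ _, hef]
    simp [eq_comm]
  -- the combined dual pair
  let t : Fin n ⊕ Fin n → D := Sum.elim e f
  let s : Fin n ⊕ Fin n → D := Sum.elim f e
  have horth : ∀ m m', B (s m) (t m') = if m = m' then 1 else 0 := by
    rintro (i | i) (j | j) <;>
      simp only [t, s, Sum.elim_inl, Sum.elim_inr, hfe, hef, hee, hff] <;>
      simp [Sum.inl.injEq, Sum.inr.injEq]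
  have hli : LinearIndependent ℝ t := by
    rw [Fintype.linearIndependent_iff]
    intro a ha m
    have := congrArg (fun z => B (s m) z) ha
    simp only [map_sum, map_smul, smul_eq_mul, map_zero] at this
    simp only [horth, mul_ite, mul_one, mul_zero, Finset.sum_ite_eq, Finset.sum_ite_eq',
      Finset.mem_univ, if_true] at this
    exact this
  have hcard : Fintype.card (Fin n ⊕ Fin n) = finrank ℝ D := by
    simp [hdim]
  let bt : Basis (Fin n ⊕ Fin n) ℝ D := basisOfLinearIndependentOfCardEqFinrank hli hcard
  have hbt : ⇑bt = t := coe_basisOfLinearIndependentOfCardEqFinrank hli hcard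
  have hdual' : ∀ μ ν, B (s μ) (bt ν) = if μ = ν then 1 else 0 := by
    intro μ ν; rw [hbt]; exact horth μ ν
  have hts : ∀ x, ∑ m, B x (s m) • t m = x := by
    intro x
    have := stmt9_res1 B hsymm bt s hdual' x
    rwa [hbt] at this
  have hst : ∀ x, ∑ m, B x (t m) • s m = x := by
    intro x
    have := stmt9_res2 B hnd bt s hdual' x
    rwa [hbt] at this
  have hbc : ∀ x, ∑ l, B x (c l) • b l = x := stmt9_res1 B hsymm b c hdual
  -- Step A : contract the third index
  have stepA : ∀ l m : ι, ∑ n', B ⁅b l, b m⁆ (b n') * B ⁅c l, c m⁆ (c n')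
      = B ⁅b l, b m⁆ ⁅c l, c m⁆ := by
    intro l m
    conv_rhs => rw [← hbc ⁅c l, c m⁆]
    rw [map_sum]
    exact (Finset.sum_congr rfl fun n' _ => by rw [map_smul]; simp [mul_comm]).symm
  -- Step B : change to the adapted dual pair
  have hFbil : ∀ (p : ι → D) (q : ι → D) (x x' y : D) (a : ℝ),
      True := fun _ _ _ _ _ _ => trivial
  let F₁ : D →ₗ[ℝ] D →ₗ[ℝ] ℝ := LinearMap.mk₂ ℝ (fun x y => ∑ m, B ⁅x, b m⁆ ⁅y, c m⁆)
    (fun x x' y => by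
      simp only [add_lie, map_add, LinearMap.add_apply, Finset.sum_add_distrib])
    (fun a x y => by
      simp only [smul_lie, map_smul, LinearMap.smul_apply, smul_eq_mul, Finset.mul_sum])
    (fun x y y' => by
      simp only [add_lie, map_add, Finset.sum_add_distrib])
    (fun a x y => by
      simp only [smul_lie, map_smul, smul_eq_mul, Finset.mul_sum])
  have swap1 : ∑ l, ∑ m, B ⁅b l, b m⁆ ⁅c l, c m⁆
      = ∑ l', ∑ m, B ⁅t l', b m⁆ ⁅s l', c m⁆ := by
    have := stmt9_swapPair B hsymm b c t s hbc hts hst F₁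
    simpa only [LinearMap.mk₂_apply, F₁] using this
  have swap2 : ∀ l', ∑ m, B ⁅t l', b m⁆ ⁅s l', c m⁆
      = ∑ m', B ⁅t l', t m'⁆ ⁅s l', s m'⁆ := by
    intro l'
    let F₂ : D →ₗ[ℝ] D →ₗ[ℝ] ℝ := LinearMap.mk₂ ℝ (fun x y => B ⁅t l', x⁆ ⁅s l', y⁆)
      (fun x x' y => by simp only [lie_add, map_add, LinearMap.add_apply])
      (fun a x y => by simp only [lie_smul, map_smul, LinearMap.smul_apply, smul_eq_mul])
      (fun x y y' => by simp only [lie_add, map_add])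
      (fun a x y => by simp only [lie_smul, map_smul, smul_eq_mul])
    have := stmt9_swapPair B hsymm b c t s hbc hts hst F₂
    simpa only [LinearMap.mk₂_apply, F₂] using this
  -- the element v
  let v : D := ∑ k, ⁅e k, f k⁆
  -- trace identity : pairing with v computes the trace of ad on g
  have hcoord : ∀ (z : g) (k : Fin n), B (z : D) (f k) = bg.repr z k := by
    intro z k
    have hz : (z : D) = ∑ j, bg.repr z j • e j := by
      calc (z : D) = ((∑ j, bg.repr z j • bg j : g) : D) := by rw [bg.sum_repr z]
        _ = ∑ j, bg.repr z j • e j := by push_cast; rfl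
    rw [hz, map_sum, LinearMap.sum_apply]
    have h1 : ∀ j, B (bg.repr z j • e j) (f k) = bg.repr z j * B (e j) (f k) := by
      intro j; rw [map_smul]; simp
    simp only [h1, hef, mul_ite, mul_one, mul_zero, Finset.sum_ite_eq',
      Finset.mem_univ, if_true]
  have htr : ∀ x ∈ g, B x v = 0 := by
    intro x hx
    set x' : g := ⟨x, hx⟩ with hx'
    have : B x v = ∑ k, B ⁅x, e k⁆ (f k) := by
      rw [show B x v = ∑ k, B x ⁅e k, f k⁆ by rw [map_sum]]
      exact Finset.sum_congr rfl fun k _ => (hinv x (e k) (f k)).symm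
    rw [this]
    have hterm : ∀ k, B ⁅x, e k⁆ (f k) = bg.repr ⁅x', bg k⁆ k := by
      intro k
      have hco : ((⁅x', bg k⁆ : g) : D) = ⁅x, e k⁆ := rfl
      rw [← hco, hcoord]
    simp only [hterm]
    have := huni x'
    rw [LinearMap.trace_eq_matrix_trace ℝ bg (LieAlgebra.ad ℝ g x'), Matrix.trace] at this
    simpa [LinearMap.toMatrix_apply, Matrix.diag, LieAlgebra.ad_apply] using this
  have hvg : v ∈ g := hmemg v htr
  have hBvv : B v v = 0 := htr v hvg
  -- resolution restricted to g
  have hsplitres : ∀ z : D, ∑ j, B z (f j) • e j = z - ∑ j, B z (e j) • f j := by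
    intro z
    have h := hts z
    rw [Fintype.sum_sum_type] at h
    simp only [t, s, Sum.elim_inl, Sum.elim_inr] at h
    linear_combination (norm := module) h
  have hgres : ∀ z : D, z ∈ g → ∑ k, B z (f k) • e k = z := by
    intro z hz
    rw [hsplitres z]
    have h2 : ∑ j, B z (e j) • f j = 0 :=
      Finset.sum_eq_zero fun j _ => by rw [horthg z (e j) hz (he j), zero_smul]
    rw [h2, sub_zero]
  -- the key algebraic identity
  have hP : ∀ x : D, x ∈ g → ∑ i, ∑ j, (B x ⁅f i, f j⁆) • ⁅e i, e j⁆ = ⁅x, v⁆ := by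
    intro x hx
    have step1 : ∀ i : Fin n, ∑ j, (B x ⁅f i, f j⁆) • ⁅e i, e j⁆
        = ⁅e i, ⁅x, f i⁆⁆ - ⁅e i, ∑ j, B ⁅x, f i⁆ (e j) • f j⁆ := by
      intro i
      have : ∑ j, (B x ⁅f i, f j⁆) • ⁅e i, e j⁆ = ⁅e i, ∑ j, B ⁅x, f i⁆ (f j) • e j⁆ := by
        rw [stmt9_lie_sum]
        refine Finset.sum_congr rfl fun j _ => ?_
        rw [lie_smul, hinv x (f i) (f j)]
      rw [this, hsplitres ⁅x, f i⁆, lie_sub]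
    have step2 : ∑ i, ⁅e i, ∑ j, B ⁅x, f i⁆ (e j) • f j⁆ = - ∑ j, ⁅⁅x, e j⁆, f j⁆ := by
      have hco : ∀ i j, B ⁅x, f i⁆ (e j) = - B ⁅x, e j⁆ (f i) := by
        intro i j
        rw [hinv x (f i) (e j), show ⁅f i, e j⁆ = -⁅e j, f i⁆ from (lie_skew _ _).symm,
          map_neg, hinv x (e j) (f i)]
      calc ∑ i, ⁅e i, ∑ j, B ⁅x, f i⁆ (e j) • f j⁆
          = ∑ i, ∑ j, (- B ⁅x, e j⁆ (f i)) • ⁅e i, f j⁆ := by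
            refine Finset.sum_congr rfl fun i _ => ?_
            rw [stmt9_lie_sum]
            refine Finset.sum_congr rfl fun j _ => ?_
            rw [lie_smul, hco i j]
        _ = - ∑ j, ∑ i, (B ⁅x, e j⁆ (f i)) • ⁅e i, f j⁆ := by
            rw [Finset.sum_comm, ← Finset.sum_neg_distrib]
            exact Finset.sum_congr rfl fun j _ => by
              rw [← Finset.sum_neg_distrib]
              exact Finset.sum_congr rfl fun i _ => (neg_smul _ _)
        _ = - ∑ j, ⁅⁅x, e j⁆, f j⁆ := by
            congr 1
            refine Finset.sum_congr rfl fun j _ => ?_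
            have : ∑ i, (B ⁅x, e j⁆ (f i)) • ⁅e i, f j⁆
                = ⁅∑ i, (B ⁅x, e j⁆ (f i)) • e i, f j⁆ := by
              rw [stmt9_sum_lie]
              exact Finset.sum_congr rfl fun i _ => (smul_lie _ _ _).symm
            rw [this, hgres ⁅x, e j⁆ (g.lie_mem hx (he j))]
    calc ∑ i, ∑ j, (B x ⁅f i, f j⁆) • ⁅e i, e j⁆
        = ∑ i, ⁅e i, ⁅x, f i⁆⁆ - (- ∑ j, ⁅⁅x, e j⁆, f j⁆) := by
          rw [← step2, ← Finset.sum_sub_distrib]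
          exact Finset.sum_congr rfl fun i _ => step1 i
      _ = ∑ i, ⁅e i, ⁅x, f i⁆⁆ + ∑ j, ⁅⁅x, e j⁆, f j⁆ := by rw [sub_neg_eq_add]
      _ = ⁅x, v⁆ := by
          have : ∀ j : Fin n, ⁅⁅x, e j⁆, f j⁆ = ⁅x, ⁅e j, f j⁆⁆ - ⁅e j, ⁅x, f j⁆⁆ :=
            fun j => lie_lie x (e j) (f j)
          simp only [this]
          rw [Finset.sum_sub_distrib, show ⁅x, v⁆ = ∑ j, ⁅x, ⁅e j, f j⁆⁆ from stmt9_lie_sum x _]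
          abel
  -- the two block sums
  have hexp : ∀ z : D, z ∈ g → ∀ X : D, B z X = ∑ k, B z (f k) * B (e k) X := by
    intro z hz X
    conv_lhs => rw [← hgres z hz]
    rw [map_sum, LinearMap.sum_apply]
    exact Finset.sum_congr rfl fun k _ => by rw [map_smul]; simp
  have hY : ∑ i, ∑ j, B ⁅e i, e j⁆ ⁅f i, f j⁆ = - B v v := by
    calc ∑ i, ∑ j, B ⁅e i, e j⁆ ⁅f i, f j⁆
        = ∑ i, ∑ j, ∑ k, B ⁅e i, e j⁆ (f k) * B (e k) ⁅f i, f j⁆ :=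
          Finset.sum_congr rfl fun i _ => Finset.sum_congr rfl fun j _ =>
            hexp ⁅e i, e j⁆ (g.lie_mem (he i) (he j)) ⁅f i, f j⁆
      _ = ∑ k, ∑ i, ∑ j, B ⁅e i, e j⁆ (f k) * B (e k) ⁅f i, f j⁆ := by
          have hin : ∀ i : Fin n, ∑ j, ∑ k, B ⁅e i, e j⁆ (f k) * B (e k) ⁅f i, f j⁆
              = ∑ k, ∑ j, B ⁅e i, e j⁆ (f k) * B (e k) ⁅f i, f j⁆ :=
            fun i => Finset.sum_comm
          simp only [hin]
          exact Finset.sum_comm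
      _ = ∑ k, B (∑ i, ∑ j, (B (e k) ⁅f i, f j⁆) • ⁅e i, e j⁆) (f k) := by
          refine Finset.sum_congr rfl fun k _ => ?_
          rw [map_sum, LinearMap.sum_apply]
          refine Finset.sum_congr rfl fun i _ => ?_
          rw [map_sum, LinearMap.sum_apply]
          refine Finset.sum_congr rfl fun j _ => ?_
          rw [map_smul, LinearMap.smul_apply, smul_eq_mul]
          exact mul_comm _ _
      _ = ∑ k, B ⁅e k, v⁆ (f k) := by
          refine Finset.sum_congr rfl fun k _ => ?_
          rw [hP (e k) (he k)]
      _ = - B v v := by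
          have h1 : ∀ k : Fin n, B ⁅e k, v⁆ (f k) = - B v ⁅e k, f k⁆ := by
            intro k
            rw [show ⁅e k, v⁆ = -⁅v, e k⁆ from (lie_skew _ _).symm, map_neg,
              LinearMap.neg_apply, hinv v (e k) (f k)]
          simp only [h1]
          rw [Finset.sum_neg_distrib]
          congr 1
          exact (map_sum (B v) (fun k => ⁅e k, f k⁆) Finset.univ).symm
  have hZ : ∑ i, ∑ j, B ⁅e i, f j⁆ ⁅f i, e j⁆ = - B v v - B v v := by
    have hterm : ∀ i j : Fin n, B ⁅e i, f j⁆ ⁅f i, e j⁆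
        = B ⁅e i, e j⁆ ⁅f i, f j⁆ + B (e i) ⁅f i, ⁅f j, e j⁆⁆ := by
      intro i j
      rw [hinv (e i) (f j) ⁅f i, e j⁆, leibniz_lie (f j) (f i) (e j), map_add]
      congr 1
      rw [show ⁅⁅f j, f i⁆, e j⁆ = -⁅e j, ⁅f j, f i⁆⁆ from (lie_skew _ _).symm, map_neg,
        ← hinv (e i) (e j) ⁅f j, f i⁆,
        show ⁅f j, f i⁆ = -⁅f i, f j⁆ from (lie_skew _ _).symm, map_neg]
      ring
    calc ∑ i, ∑ j, B ⁅e i, f j⁆ ⁅f i, e j⁆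
        = ∑ i, ∑ j, (B ⁅e i, e j⁆ ⁅f i, f j⁆ + B (e i) ⁅f i, ⁅f j, e j⁆⁆) :=
          Finset.sum_congr rfl fun i _ => Finset.sum_congr rfl fun j _ => hterm i j
      _ = (∑ i, ∑ j, B ⁅e i, e j⁆ ⁅f i, f j⁆) + ∑ i, ∑ j, B (e i) ⁅f i, ⁅f j, e j⁆⁆ := by
          rw [← Finset.sum_add_distrib]
          exact Finset.sum_congr rfl fun i _ => Finset.sum_add_distrib
      _ = - B v v - B v v := by
          rw [hY]
          have h2 : ∑ i, ∑ j, B (e i) ⁅f i, ⁅f j, e j⁆⁆ = - B v v := by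
            have hrow : ∀ i : Fin n, ∑ j, B (e i) ⁅f i, ⁅f j, e j⁆⁆ = - B ⁅e i, f i⁆ v := by
              intro i
              rw [← map_sum, ← stmt9_lie_sum]
              have : ∑ j, ⁅f j, e j⁆ = -v := by
                rw [show v = ∑ k, ⁅e k, f k⁆ from rfl, ← Finset.sum_neg_distrib]
                exact Finset.sum_congr rfl fun j _ => (lie_skew _ _).symm
              rw [this, lie_neg, map_neg, hinv (e i) (f i) v]
            simp only [hrow]
            rw [Finset.sum_neg_distrib]
            congr 1
            have hBv : (B v) v = ∑ i, (B ⁅e i, f i⁆) v := by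
              conv_lhs => rw [show (B v) = B (∑ k, ⁅e k, f k⁆) from rfl]
              rw [map_sum B _ Finset.univ, LinearMap.sum_apply]
            rw [hBv]
          rw [h2]
          ring
  -- put everything together
  calc ∑ l : ι, ∑ m : ι, ∑ n', B ⁅b l, b m⁆ (b n') * B ⁅c l, c m⁆ (c n')
      = ∑ l, ∑ m, B ⁅b l, b m⁆ ⁅c l, c m⁆ :=
        Finset.sum_congr rfl fun l _ => Finset.sum_congr rfl fun m _ => stepA l m
    _ = ∑ l', ∑ m', B ⁅t l', t m'⁆ ⁅s l', s m'⁆ := by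
        rw [swap1]
        exact Finset.sum_congr rfl fun l' _ => swap2 l'
    _ = 0 := by
        rw [Fintype.sum_sum_type]
        have hY0 : ∑ i, ∑ j, B ⁅e i, e j⁆ ⁅f i, f j⁆ = 0 := by rw [hY, hBvv, neg_zero]
        have hZ0 : ∑ i, ∑ j, B ⁅e i, f j⁆ ⁅f i, e j⁆ = 0 := by
          rw [hZ, hBvv]; ring
        have hY0' : ∑ i, ∑ j, B ⁅f i, f j⁆ ⁅e i, e j⁆ = 0 := by
          rw [← hY0]
          exact Finset.sum_congr rfl fun i _ => Finset.sum_congr rfl fun j _ => hsymm.eq _ _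
        have hZ0' : ∑ i, ∑ j, B ⁅f i, e j⁆ ⁅e i, f j⁆ = 0 := by
          rw [← hZ0]
          exact Finset.sum_congr rfl fun i _ => Finset.sum_congr rfl fun j _ => hsymm.eq _ _
        have e1 : ∀ i : Fin n, ∑ m', B ⁅t (Sum.inl i), t m'⁆ ⁅s (Sum.inl i), s m'⁆
            = (∑ j, B ⁅e i, e j⁆ ⁅f i, f j⁆) + ∑ j, B ⁅e i, f j⁆ ⁅f i, e j⁆ := by
          intro i
          rw [Fintype.sum_sum_type]
          simp only [t, s, Sum.elim_inl, Sum.elim_inr]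
        have e2 : ∀ i : Fin n, ∑ m', B ⁅t (Sum.inr i), t m'⁆ ⁅s (Sum.inr i), s m'⁆
            = (∑ j, B ⁅f i, e j⁆ ⁅e i, f j⁆) + ∑ j, B ⁅f i, f j⁆ ⁅e i, e j⁆ := by
          intro i
          rw [Fintype.sum_sum_type]
          simp only [t, s, Sum.elim_inl, Sum.elim_inr]
        simp only [e1, e2]
        rw [Finset.sum_add_distrib, Finset.sum_add_distrib, hY0, hZ0, hY0', hZ0']
        ring
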